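/- arXiv:0707.0667 — 2 statements merged into one kernel-verified Lean document; each statement's English description precedes it below -/
import Mathlib

section
/- The Szegő coefficients α_{ν,n}^{(λ)} = (1-λ)_ν(n+1)_ν/(ν!(n+λ+1)_ν) satisfy, for integer λ = m ≥ 2 and 0 ≤ ν ≤ m−1, the identity α_{ν-1,n+1}^{(m-1)} + α_{ν,n+1}^{(m-1)} − (2(n+2)/(n+m+1)) α_{ν-1,n+2}^{(m-1)} = α_{ν,n}^{(m)}, with the convention that α terms with negative index ν vanish. -/
open Finset

/-- Pochhammer symbol (rising factorial) for a real argument. -/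
noncomputable def poch (a : ℝ) (k : ℕ) : ℝ := ∏ i ∈ Finset.range k, (a + i)

/-- Szegő coefficient `α_{ν,n}^{(λ)}`, with the convention that it vanishes
for negative index `ν`. -/
noncomputable def szegoAlpha (lam : ℝ) (ν : ℤ) (n : ℕ) : ℝ :=
  if ν < 0 then 0
  else poch (1 - lam) ν.toNat * poch (n + 1) ν.toNat /
    ((Nat.factorial ν.toNat : ℝ) * poch (n + lam + 1) ν.toNat)

lemma poch_succ (a : ℝ) (k : ℕ) : poch a (k+1) = poch a k * (a+k) := by
  simp [poch, prod_range_succ]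

lemma poch_shift (a : ℝ) (k : ℕ) : poch a (k+1) = a * poch (a+1) k := by
  rw [poch, prod_range_succ', poch]
  push_cast
  ring_nf

lemma poch_pos (a : ℝ) (ha : 0 < a) (k : ℕ) : 0 < poch a k := by
  apply prod_pos
  intro i _
  positivity

theorem szego_alpha_recurrence (m : ℕ) (hm : 2 ≤ m) (n : ℕ) (ν : ℕ) (hν : ν ≤ m - 1) :
    szegoAlpha ((m : ℝ) - 1) ((ν : ℤ) - 1) (n + 1) +
        szegoAlpha ((m : ℝ) - 1) (ν : ℤ) (n + 1) -
      (2 * ((n : ℝ) + 2) / ((n : ℝ) + m + 1)) *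
        szegoAlpha ((m : ℝ) - 1) ((ν : ℤ) - 1) (n + 2) =
      szegoAlpha (m : ℝ) (ν : ℤ) n := by
  obtain _ | k := ν
  · simp [szegoAlpha, poch]
  · have h1 : ¬ ((k+1 : ℤ) - 1 < 0) := by omega
    have h2 : ¬ ((k+1 : ℤ) < 0) := by omega
    have h3 : ((k+1 : ℤ) - 1).toNat = k := by omega
    have h4 : ((k+1 : ℤ)).toNat = k + 1 := by omega
    simp only [szegoAlpha]
    push_cast
    rw [if_neg h1, if_neg h2, h3, h4]
    simp only [if_neg h1, if_neg h2, h3, h4]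
    have hn2 : (n:ℝ) + 2 ≠ 0 := by positivity
    have hnm : (n:ℝ) + m + 1 ≠ 0 := by positivity
    have hR : poch ((n:ℝ) + m + 1) k ≠ 0 :=
      ne_of_gt (poch_pos _ (by positivity) k)
    have hfac : ((k.factorial : ℕ) : ℝ) ≠ 0 := by
      exact_mod_cast Nat.factorial_ne_zero k
    have hk1 : (k : ℝ) + 1 ≠ 0 := by positivity
    have hnmk : (n:ℝ) + m + 1 + k ≠ 0 := by positivity
    rw [show (1:ℝ) - ((m:ℝ) - 1) = 2 - m from by ring,
        show (n:ℝ) + 1 + 1 = (n:ℝ) + 2 from by ring,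
        show (n:ℝ) + 1 + ((m:ℝ) - 1) + 1 = (n:ℝ) + m + 1 from by ring,
        show (n:ℝ) + 2 + 1 = (n:ℝ) + 3 from by ring,
        show (n:ℝ) + 2 + ((m:ℝ) - 1) + 1 = (n:ℝ) + m + 2 from by ring]
    have hA : poch ((n:ℝ)+3) k = poch ((n:ℝ)+2) k * ((n:ℝ)+2+k) / ((n:ℝ)+2) := by
      have := poch_succ ((n:ℝ)+2) k
      rw [poch_shift ((n:ℝ)+2) k, show (n:ℝ)+2+1 = (n:ℝ)+3 from by ring] at this
      field_simp
      linarith [this]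
    have hB : poch ((n:ℝ)+m+2) k
        = poch ((n:ℝ)+m+1) k * ((n:ℝ)+m+1+k) / ((n:ℝ)+m+1) := by
      have := poch_succ ((n:ℝ)+m+1) k
      rw [poch_shift ((n:ℝ)+m+1) k, show (n:ℝ)+m+1+1 = (n:ℝ)+m+2 from by ring] at this
      field_simp
      linarith [this]
    rw [hA, hB, poch_succ (2-(m:ℝ)) k, poch_succ ((n:ℝ)+2) k,
        poch_succ ((n:ℝ)+m+1) k, poch_shift (1-(m:ℝ)) k, poch_shift ((n:ℝ)+1) k,
        show (1:ℝ)-(m:ℝ)+1 = 2 - m from by ring,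
        show (n:ℝ)+1+1 = (n:ℝ)+2 from by ring]
    push_cast [Nat.factorial_succ]
    field_simp
    ring
end

section
/- The entropy integral of the Chebyshev polynomial of the second kind satisfies E(C_n^{(1)}) = −∫_{−1}^{1} (U_n(x))² log((U_n(x))²) √(1−x²) dx = (π/2)(1/(n+1) − 1) for all n ≥ 0. -/
open Finset

/-- Gegenbauer (ultraspherical) polynomial `C_n^{(λ)}(x)`, via its standard
explicit expansion. -/
noncomputable def gegen (lam : ℝ) (n : ℕ) (x : ℝ) : ℝ :=
  ∑ k ∈ Finset.range (n / 2 + 1),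
    (-1 : ℝ) ^ k * poch lam (n - k) /
      ((Nat.factorial k : ℝ) * (Nat.factorial (n - 2 * k) : ℝ)) * (2 * x) ^ (n - 2 * k)


section Aux
open intervalIntegral Real

lemma poch_one (k : ℕ) : poch 1 k = k.factorial := by
  induction k with
  | zero => simp [poch]
  | succ k ih => rw [poch, Finset.prod_range_succ, ← poch, ih]; push_cast [Nat.factorial_succ]; ring

lemma gegen_one_eq (n : ℕ) (x : ℝ) :
    gegen 1 n x = ∑ k ∈ Finset.range (n / 2 + 1),
      (-1 : ℝ) ^ k * ((n - k).choose k : ℝ) * (2 * x) ^ (n - 2 * k) := by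
  unfold gegen
  refine Finset.sum_congr rfl fun k hk => ?_
  simp only [Finset.mem_range] at hk
  have hk2 : 2 * k ≤ n := by omega
  rw [poch_one]
  have h : (n - k).choose k * (k.factorial * (n - 2*k).factorial) = (n - k).factorial := by
    have := Nat.choose_mul_factorial_mul_factorial (show k ≤ n - k by omega)
    have e : n - k - k = n - 2*k := by omega
    rw [e] at this; linarith [this]
  have hne : ((k.factorial : ℝ) * ((n - 2*k).factorial : ℝ)) ≠ 0 := by positivity
  have key : ((n - k).factorial : ℝ) / ((k.factorial : ℝ) * ((n - 2*k).factorial : ℝ))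
      = ((n - k).choose k : ℝ) := by
    rw [div_eq_iff hne, ← h]; push_cast; ring
  rw [mul_div_assoc, key]

lemma gegen_one_rec (n : ℕ) (x : ℝ) :
    gegen 1 (n+2) x = 2*x*gegen 1 (n+1) x - gegen 1 n x := by
  have key : ∀ k : ℕ, 2*k+1 ≤ n →
      ((-1:ℝ))^(k+1) * (((n+2) - (k+1)).choose (k+1) : ℝ) * (2*x)^((n+2) - 2*(k+1))
      = 2*x*((-1:ℝ)^(k+1) * (((n+1) - (k+1)).choose (k+1) : ℝ) * (2*x)^((n+1) - 2*(k+1)))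
        - (-1:ℝ)^k * ((n - k).choose k : ℝ) * (2*x)^(n - 2*k) := by
    intro k hk
    have e1 : (n+2) - (k+1) = (n - k) + 1 := by omega
    have e2 : (n+1) - (k+1) = n - k := by omega
    have e3 : (n+2) - 2*(k+1) = n - 2*k := by omega
    have e4 : n - 2*k = ((n+1) - 2*(k+1)) + 1 := by omega
    rw [e1, e2, e3, Nat.choose_succ_succ (n-k) k, e4]
    push_cast
    ring
  rw [gegen_one_eq, gegen_one_eq, gegen_one_eq]
  rcases Nat.even_or_odd n with ⟨p, hp⟩ | ⟨p, hp⟩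
  · subst hp
    have r2 : (p + p + 2)/2 + 1 = p + 2 := by omega
    have r1 : (p + p + 1)/2 + 1 = p + 1 := by omega
    have r0 : (p + p)/2 + 1 = p + 1 := by omega
    rw [r2, r1, r0]
    rw [Finset.sum_range_succ' _ (p+1), Finset.sum_range_succ _ p,
        Finset.sum_range_succ' _ p, Finset.sum_range_succ _ p]
    have H := Finset.sum_congr rfl (fun k (hk : k ∈ Finset.range p) => by
      have := key k (by simp at hk; omega)
      exact this)
    rw [H]
    rw [Finset.sum_sub_distrib, mul_add (2*x), Finset.mul_sum]
    have edge1 : ((-1:ℝ))^(p+1) * (((p+p+2) - (p+1)).choose (p+1) : ℝ) * (2*x)^((p+p+2) - 2*(p+1))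
        = - ((-1:ℝ)^p * (((p+p) - p).choose p : ℝ) * (2*x)^((p+p) - 2*p)) := by
      have a1 : (p+p+2) - (p+1) = p+1 := by omega
      have a2 : (p+p+2) - 2*(p+1) = 0 := by omega
      have a3 : (p+p) - p = p := by omega
      have a4 : (p+p) - 2*p = 0 := by omega
      rw [a1, a2, a3, a4, Nat.choose_self, Nat.choose_self]
      push_cast; ring
    have edge2 : ((-1:ℝ))^0 * (((p+p+2) - 0).choose 0 : ℝ) * (2*x)^((p+p+2) - 2*0)
        = 2*x*((-1:ℝ)^0 * (((p+p+1) - 0).choose 0 : ℝ) * (2*x)^((p+p+1) - 2*0)) := by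
      have a2 : (p+p+2) - 2*0 = ((p+p+1) - 2*0) + 1 := by omega
      rw [a2]; simp [pow_succ]; ring
    rw [edge1, edge2]
    ring
  · subst hp
    have r2 : (2*p + 1 + 2)/2 + 1 = p + 2 := by omega
    have r1 : (2*p + 1 + 1)/2 + 1 = p + 2 := by omega
    have r0 : (2*p + 1)/2 + 1 = p + 1 := by omega
    rw [r2, r1, r0]
    rw [Finset.sum_range_succ' _ (p+1), Finset.sum_range_succ' _ (p+1)]
    have H := Finset.sum_congr rfl (fun k (hk : k ∈ Finset.range (p+1)) => by
      have := key k (by simp at hk; omega)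
      exact this)
    rw [H]
    rw [Finset.sum_sub_distrib, mul_add (2*x), Finset.mul_sum]
    have edge2 : ((-1:ℝ))^0 * (((2*p+1+2) - 0).choose 0 : ℝ) * (2*x)^((2*p+1+2) - 2*0)
        = 2*x*((-1:ℝ)^0 * (((2*p+1+1) - 0).choose 0 : ℝ) * (2*x)^((2*p+1+1) - 2*0)) := by
      have a2 : (2*p+1+2) - 2*0 = ((2*p+1+1) - 2*0) + 1 := by omega
      rw [a2]; simp [pow_succ]; ring
    rw [edge2]
    ring

lemma gegen_one_zero (x : ℝ) : gegen 1 0 x = 1 := by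
  rw [gegen_one_eq]; simp

lemma gegen_one_one (x : ℝ) : gegen 1 1 x = 2 * x := by
  rw [gegen_one_eq]; simp

lemma gegen_one_eq_U (n : ℕ) (x : ℝ) :
    gegen 1 n x = (Polynomial.Chebyshev.U ℝ (n : ℤ)).eval x := by
  induction n using Nat.twoStepInduction with
  | zero => simp [gegen_one_zero, Polynomial.Chebyshev.U_zero]
  | one => simp [gegen_one_one, Polynomial.Chebyshev.U_one]
  | more n ih1 ih2 =>
    have : ((n + 2 : ℕ) : ℤ) = (n : ℤ) + 2 := by push_cast; ring
    rw [gegen_one_rec, this, Polynomial.Chebyshev.U_add_two]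
    rw [ih1, ih2]
    simp [Polynomial.eval_sub, Polynomial.eval_mul]

lemma gegen_cos (n : ℕ) (θ : ℝ) :
    gegen 1 n (Real.cos θ) * Real.sin θ = Real.sin (((n : ℝ) + 1) * θ) := by
  rw [gegen_one_eq_U]
  have := Polynomial.Chebyshev.U_real_cos θ (n : ℤ)
  push_cast at this
  exact this

lemma gegen_continuous (n : ℕ) : Continuous fun x => gegen 1 n x := by
  have : (fun x => gegen 1 n x) = fun x => ∑ k ∈ Finset.range (n / 2 + 1),
      (-1 : ℝ) ^ k * ((n - k).choose k : ℝ) * (2 * x) ^ (n - 2 * k) := by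
    funext x; exact gegen_one_eq n x
  rw [this]
  exact continuous_finset_sum _ fun k _ => by fun_prop

lemma phi_cont : Continuous fun t : ℝ => t^2 * Real.log (t^2) :=
  Real.continuous_mul_log.comp (continuous_pow 2)

lemma psi_cont : Continuous fun t : ℝ => t * Real.log (t^2) := by
  have : (fun t : ℝ => t * Real.log (t^2)) = fun t : ℝ => 2 * (t * Real.log t) := by
    funext t; rw [Real.log_pow]; push_cast; ring
  rw [this]
  exact continuous_const.mul Real.continuous_mul_log

noncomputable def Q (k : ℕ) (θ : ℝ) : ℝ :=
  1 + Real.cos (2*(k+1)*θ) + 2 * ∑ j ∈ Finset.range k, Real.cos (2*(j+1)*θ)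

lemma Q_cont (k : ℕ) : Continuous (Q k) := by
  unfold Q; fun_prop

lemma Q_id (k : ℕ) (θ : ℝ) : Real.sin (2*(k+1)*θ) * Real.cos θ = Real.sin θ * Q k θ := by
  induction k with
  | zero =>
    unfold Q
    simp only [Finset.range_zero, Finset.sum_empty, mul_zero, add_zero]
    push_cast
    have h2 : (2:ℝ)*(0+1)*θ = 2*θ := by ring
    rw [h2, Real.sin_two_mul, Real.cos_two_mul]
    ring
  | succ k ih =>
    unfold Q
    rw [Finset.sum_range_succ]
    have hdiff : Real.sin (2*(↑k+1+1)*θ) - Real.sin (2*(↑k+1)*θ)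
        = 2 * Real.sin θ * Real.cos ((2*(↑k+1)+1)*θ) := by
      rw [Real.sin_sub_sin]
      ring_nf
    have hprod : 2 * Real.cos ((2*(↑k+1)+1)*θ) * Real.cos θ
        = Real.cos (2*(↑k+1+1)*θ) + Real.cos (2*(↑k+1)*θ) := by
      rw [Real.cos_add_cos]
      ring_nf
    have expand : Real.sin (2*(↑k+1+1)*θ)*Real.cos θ
        = Real.sin (2*(↑k+1)*θ)*Real.cos θ + Real.sin θ * (2*Real.cos ((2*(↑k+1)+1)*θ)*Real.cos θ) := by
      linear_combination hdiff * Real.cos θ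
    push_cast
    push_cast at ih
    rw [expand, hprod, ih]
    unfold Q
    push_cast
    ring

lemma cos_mul_integral (j : ℕ) : ∫ θ in (0:ℝ)..Real.pi, Real.cos (2*((j:ℝ)+1)*θ) = 0 := by
  have hc : (2*((j:ℝ)+1)) ≠ 0 := by positivity
  have h := intervalIntegral.integral_comp_mul_left (fun y => Real.cos y)
    (a := 0) (b := Real.pi) hc
  simp only [mul_zero] at h
  rw [h, integral_cos, Real.sin_zero]
  have e : 2*((j:ℝ)+1) * Real.pi = ((2*(j+1) : ℕ) : ℝ) * Real.pi := by push_cast; ring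
  rw [e, Real.sin_nat_mul_pi]
  simp

lemma Q_integral (k : ℕ) : ∫ θ in (0:ℝ)..Real.pi, Q k θ = Real.pi := by
  unfold Q
  have hi1 : IntervalIntegrable (fun _ : ℝ => (1:ℝ)) MeasureTheory.volume 0 Real.pi :=
    intervalIntegrable_const
  have hi2 : IntervalIntegrable (fun θ => Real.cos (2*((k:ℝ)+1)*θ)) MeasureTheory.volume 0 Real.pi :=
    (by fun_prop : Continuous fun θ => Real.cos (2*((k:ℝ)+1)*θ)).intervalIntegrable _ _
  have hi3 : IntervalIntegrable (fun θ => 2 * ∑ j ∈ Finset.range k, Real.cos (2*((j:ℝ)+1)*θ))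
      MeasureTheory.volume 0 Real.pi :=
    (by fun_prop : Continuous fun θ => 2 * ∑ j ∈ Finset.range k, Real.cos (2*((j:ℝ)+1)*θ)).intervalIntegrable _ _
  rw [intervalIntegral.integral_add (hi1.add hi2) hi3,
      intervalIntegral.integral_add hi1 hi2,
      intervalIntegral.integral_const_mul,
      integral_finset_sum (f := fun (j:ℕ) (θ:ℝ) => Real.cos (2*((j:ℝ)+1)*θ))
        (fun j _ => (by fun_prop : Continuous fun θ => Real.cos (2*((j:ℝ)+1)*θ)).intervalIntegrable _ _),
      cos_mul_integral k]
  have : ∀ j ∈ Finset.range k, (∫ θ in (0:ℝ)..Real.pi, Real.cos (2*((j:ℝ)+1)*θ)) = 0 :=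
    fun j _ => cos_mul_integral j
  rw [Finset.sum_congr rfl this]
  simp

lemma hasDeriv_key (n : ℕ) (θ : ℝ) (hθ : θ ∈ Set.Ioo 0 Real.pi) :
    HasDerivAt (fun θ => -(1/2) * ((Real.sin (2*((n:ℝ)+1)*θ)/(2*((n:ℝ)+1)) - Real.sin (2*θ)/2)
        * Real.log (Real.sin θ^2)))
      ((Real.sin (((n:ℝ)+1)*θ)^2 - Real.sin θ^2) * Real.log (Real.sin θ^2)
        - (Q n θ/(2*((n:ℝ)+1)) - Q 0 θ/2)) θ := by
  set m : ℝ := (n:ℝ)+1 with hm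
  have hm0 : m ≠ 0 := by positivity
  have hsθ : Real.sin θ ≠ 0 := ne_of_gt (Real.sin_pos_of_pos_of_lt_pi hθ.1 hθ.2)
  have h1 : HasDerivAt (fun θ : ℝ => 2*m*θ) (2*m) θ := by
    simpa using (hasDerivAt_id θ).const_mul (2*m)
  have h2 : HasDerivAt (fun θ : ℝ => 2*θ) (2:ℝ) θ := by
    simpa using (hasDerivAt_id θ).const_mul (2:ℝ)
  have hA : HasDerivAt (fun θ : ℝ => Real.sin (2*m*θ)) (Real.cos (2*m*θ)*(2*m)) θ :=
    (Real.hasDerivAt_sin _).comp θ h1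
  have hB : HasDerivAt (fun θ : ℝ => Real.sin (2*θ)) (Real.cos (2*θ)*2) θ :=
    (Real.hasDerivAt_sin _).comp θ h2
  have hsq : HasDerivAt (fun θ : ℝ => Real.sin θ^2) (2*Real.sin θ*Real.cos θ) θ := by
    have := (Real.hasDerivAt_sin θ).pow 2
    exact this.congr_deriv (by simp)
  have hL : HasDerivAt (fun θ : ℝ => Real.log (Real.sin θ^2))
      ((Real.sin θ^2)⁻¹ * (2*Real.sin θ*Real.cos θ)) θ := by
    exact (Real.hasDerivAt_log (pow_ne_zero 2 hsθ)).comp θ hsq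
  have hS : HasDerivAt (fun θ : ℝ => Real.sin (2*m*θ)/(2*m) - Real.sin (2*θ)/2)
      (Real.cos (2*m*θ) - Real.cos (2*θ)) θ := by
    have := (hA.div_const (2*m)).sub (hB.div_const 2)
    refine this.congr_deriv ?_
    field_simp
  have hF := ((hS.mul hL).const_mul (-(1/2) : ℝ))
  refine hF.congr_deriv ?_
  have c1 : Real.cos (2*m*θ) = 1 - 2*Real.sin (m*θ)^2 := by
    have : 2*m*θ = 2*(m*θ) := by ring
    rw [this, Real.cos_two_mul']
    linear_combination Real.sin_sq_add_cos_sq (m*θ)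
  have c2 : Real.cos (2*θ) = 1 - 2*Real.sin θ^2 := by
    rw [Real.cos_two_mul']
    linear_combination Real.sin_sq_add_cos_sq θ
  have e2 := Q_id n θ
  rw [← hm] at e2
  have e3 := Q_id 0 θ
  norm_num at e3
  rw [c1, c2]
  have t2 : (Real.sin (2*m*θ)/(2*m) - Real.sin (2*θ)/2) * ((Real.sin θ^2)⁻¹*(2*Real.sin θ*Real.cos θ))
      = Q n θ/m - Q 0 θ := by
    have q1 : Q n θ = Real.sin (2*m*θ) * Real.cos θ / Real.sin θ := by
      rw [eq_div_iff hsθ]; linear_combination -e2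
    have q0 : Q 0 θ = Real.sin (2*θ) * Real.cos θ / Real.sin θ := by
      rw [eq_div_iff hsθ]; linear_combination -e3
    rw [q1, q0]
    field_simp
  rw [t2]
  have expand : m = (n:ℝ)+1 := hm
  field_simp
  ring

lemma key_integral (n : ℕ) :
    ∫ θ in (0:ℝ)..Real.pi,
      ((gegen 1 n (Real.cos θ))^2 - 1) * (Real.sin θ^2 * Real.log (Real.sin θ^2))
      = Real.pi/(2*((n:ℝ)+1)) - Real.pi/2 := by
  set m : ℝ := (n:ℝ)+1 with hm
  have hm0 : m ≠ 0 := by positivity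
  set g : ℝ → ℝ := fun θ =>
    ((gegen 1 n (Real.cos θ))^2 - 1) * (Real.sin θ^2 * Real.log (Real.sin θ^2)) with hg
  set R : ℝ → ℝ := fun θ => Q n θ/(2*m) - Q 0 θ/2 with hR
  set F : ℝ → ℝ := fun θ =>
    -(1/2) * ((Real.sin (2*m*θ)/(2*m) - Real.sin (2*θ)/2) * Real.log (Real.sin θ^2)) with hF
  have g_eq : ∀ θ : ℝ, g θ = (Real.sin (m*θ)^2 - Real.sin θ^2) * Real.log (Real.sin θ^2) := by
    intro θ
    have e1 := gegen_cos n θ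
    rw [← hm] at e1
    simp only [hg]
    linear_combination (Real.log (Real.sin θ^2) * (gegen 1 n (Real.cos θ) * Real.sin θ + Real.sin (m*θ))) * e1
  have gcont : Continuous g := by
    apply Continuous.mul
    · exact (((gegen_continuous n).comp Real.continuous_cos).pow 2).sub continuous_const
    · exact phi_cont.comp Real.continuous_sin
  have Rcont : Continuous R := ((Q_cont n).div_const _).sub ((Q_cont 0).div_const _)
  have Fcont : Continuous F := by
    have Feq : F = fun θ => -(1/2) * ((gegen 1 (2*n+1) (Real.cos θ)/(2*m) - Real.cos θ)
        * (Real.sin θ * Real.log (Real.sin θ^2))) := by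
      funext θ
      have h2m := gegen_cos (2*n+1) θ
      have harg : ((((2*n+1 : ℕ)) : ℝ) + 1) * θ = 2*m*θ := by push_cast [hm]; ring
      rw [harg] at h2m
      simp only [hF]
      rw [Real.sin_two_mul]
      field_simp
      linear_combination (Real.log (Real.sin θ ^ 2)) * h2m
    rw [Feq]
    apply Continuous.mul continuous_const
    apply Continuous.mul
    · exact (((gegen_continuous (2*n+1)).comp Real.continuous_cos).div_const _).sub Real.continuous_cos
    · exact psi_cont.comp Real.continuous_sin
  have hFTC : ∫ θ in (0:ℝ)..Real.pi, (g θ - R θ) = F Real.pi - F 0 := by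
    apply intervalIntegral.integral_eq_sub_of_hasDerivAt_of_le Real.pi_pos.le
      Fcont.continuousOn
    · intro θ hθ
      have := hasDeriv_key n θ hθ
      rw [← hm] at this
      rw [g_eq θ]
      exact this
    · exact (gcont.sub Rcont).intervalIntegrable _ _
  have hF0 : F 0 = 0 := by simp [hF]
  have hFpi : F Real.pi = 0 := by
    have h1 : 2*m*Real.pi = ((2*n+2 : ℕ) : ℝ) * Real.pi := by push_cast [hm]; ring
    have h2 : (2:ℝ)*Real.pi = ((2 : ℕ) : ℝ) * Real.pi := by norm_num
    simp only [hF, h1, h2, Real.sin_nat_mul_pi]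
    ring
  rw [hF0, hFpi, sub_zero] at hFTC
  rw [intervalIntegral.integral_sub (gcont.intervalIntegrable _ _) (Rcont.intervalIntegrable _ _)]
    at hFTC
  have hRint : ∫ θ in (0:ℝ)..Real.pi, R θ = Real.pi/(2*m) - Real.pi/2 := by
    simp only [hR]
    rw [intervalIntegral.integral_sub (((Q_cont n).div_const _).intervalIntegrable _ _)
        (((Q_cont 0).div_const _).intervalIntegrable _ _),
      intervalIntegral.integral_div, intervalIntegral.integral_div, Q_integral, Q_integral]
  have := sub_eq_zero.mp hFTC
  rw [this, hRint]

lemma A_eq (n : ℕ) :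
    ∫ θ in (0:ℝ)..Real.pi, Real.sin (((n:ℝ)+1)*θ)^2 * Real.log (Real.sin (((n:ℝ)+1)*θ)^2)
      = ∫ θ in (0:ℝ)..Real.pi, Real.sin θ^2 * Real.log (Real.sin θ^2) := by
  set m : ℝ := (n:ℝ)+1 with hm
  have hm0 : m ≠ 0 := by positivity
  set f : ℝ → ℝ := fun y => Real.sin y^2 * Real.log (Real.sin y^2) with hf
  have hfc : Continuous f := phi_cont.comp Real.continuous_sin
  have hper : Function.Periodic f Real.pi := by
    intro y; simp only [hf, Real.sin_add_pi]; ring_nf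
  have hint : ∀ a b : ℝ, IntervalIntegrable f MeasureTheory.volume a b :=
    fun a b => hfc.intervalIntegrable a b
  have h1 := intervalIntegral.integral_comp_mul_left f (a := 0) (b := Real.pi) hm0
  have h2 := hper.intervalIntegral_add_zsmul_eq ((n:ℤ)+1) 0 hint
  have e1 : (0:ℝ) + ((n:ℤ)+1) • Real.pi = m * Real.pi := by
    push_cast [zsmul_eq_mul, hm]; ring
  have e2 : (0:ℝ) + Real.pi = Real.pi := by ring
  rw [e1, e2] at h2
  calc ∫ θ in (0:ℝ)..Real.pi, f (m*θ) = m⁻¹ • ∫ y in (m*0)..(m*Real.pi), f y := h1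
    _ = m⁻¹ • ∫ y in (0:ℝ)..(m*Real.pi), f y := by norm_num
    _ = m⁻¹ • (((n:ℤ)+1) • ∫ y in (0:ℝ)..Real.pi, f y) := by rw [h2]
    _ = ∫ y in (0:ℝ)..Real.pi, f y := by
        rw [zsmul_eq_mul, smul_eq_mul, ← mul_assoc]
        push_cast [← hm]
        rw [inv_mul_cancel₀ hm0, one_mul]

theorem entropy_gegenbauer_one (n : ℕ) :
    -∫ x in (-1 : ℝ)..1,
        (gegen 1 n x) ^ 2 * Real.log ((gegen 1 n x) ^ 2) * Real.sqrt (1 - x ^ 2) =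
      Real.pi / 2 * (1 / ((n : ℝ) + 1) - 1) := by
  set m : ℝ := (n:ℝ)+1 with hm
  set G : ℝ → ℝ := fun x =>
    (gegen 1 n x) ^ 2 * Real.log ((gegen 1 n x) ^ 2) * Real.sqrt (1 - x ^ 2) with hG
  have hGc : Continuous G := by
    apply Continuous.mul
    · exact phi_cont.comp (gegen_continuous n)
    · exact Real.continuous_sqrt.comp (by fun_prop)
  -- substitution x = cos θ
  have hderiv : ∀ x ∈ Set.uIcc (0:ℝ) Real.pi, HasDerivAt Real.cos (-Real.sin x) x :=
    fun x _ => Real.hasDerivAt_cos x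
  have hsub := intervalIntegral.integral_comp_smul_deriv hderiv
    (Continuous.continuousOn (by fun_prop)) hGc
  rw [Real.cos_zero, Real.cos_pi] at hsub
  have hsub2 : ∫ x in (-1:ℝ)..1, G x = ∫ θ in (0:ℝ)..Real.pi, Real.sin θ * G (Real.cos θ) := by
    have h3 : ∫ x in (1:ℝ)..-1, G x = -∫ x in (-1:ℝ)..1, G x :=
      intervalIntegral.integral_symm _ _
    rw [h3] at hsub
    have h4 : ∫ θ in (0:ℝ)..Real.pi, -Real.sin θ • (G ∘ Real.cos) θ
        = -∫ θ in (0:ℝ)..Real.pi, Real.sin θ * G (Real.cos θ) := by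
      rw [← intervalIntegral.integral_neg]
      apply intervalIntegral.integral_congr
      intro θ _
      simp [smul_eq_mul]
    rw [h4] at hsub
    linarith [hsub]
  -- rewrite integrand on [0, π]
  have hcong : ∀ θ ∈ Set.uIcc (0:ℝ) Real.pi,
      Real.sin θ * G (Real.cos θ)
        = Real.sin (m*θ)^2 * Real.log (Real.sin (m*θ)^2)
          - (gegen 1 n (Real.cos θ))^2 * (Real.sin θ^2 * Real.log (Real.sin θ^2)) := by
    intro θ hθ
    rw [Set.uIcc_of_le Real.pi_pos.le] at hθ
    have hsnn : 0 ≤ Real.sin θ := Real.sin_nonneg_of_nonneg_of_le_pi hθ.1 hθ.2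
    have hsq : Real.sqrt (1 - Real.cos θ^2) = Real.sin θ := by
      rw [show (1:ℝ) - Real.cos θ^2 = Real.sin θ^2 by
        linear_combination (Real.sin_sq_add_cos_sq θ).symm]
      exact Real.sqrt_sq hsnn
    have e1 := gegen_cos n θ
    rw [← hm] at e1
    simp only [hG]
    rw [hsq]
    by_cases hu0 : gegen 1 n (Real.cos θ) = 0
    · have hsm : Real.sin (m*θ) = 0 := by rw [← e1, hu0]; ring
      rw [hu0, hsm]; simp
    · by_cases hs0 : Real.sin θ = 0
      · have hsm : Real.sin (m*θ) = 0 := by rw [← e1, hs0]; ring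
        rw [hs0, hsm]; simp
      · have hlog : Real.log (Real.sin (m*θ)^2)
            = Real.log ((gegen 1 n (Real.cos θ))^2) + Real.log (Real.sin θ^2) := by
          rw [← e1, mul_pow, Real.log_mul (pow_ne_zero 2 hu0) (pow_ne_zero 2 hs0)]
        rw [hlog, ← e1]
        ring
  have hAc : Continuous fun θ : ℝ => Real.sin (m*θ)^2 * Real.log (Real.sin (m*θ)^2) := by
    have := phi_cont.comp (by fun_prop : Continuous fun θ : ℝ => Real.sin (m*θ))
    exact this
  have hCc : Continuous fun θ : ℝ => Real.sin θ^2 * Real.log (Real.sin θ^2) := by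
    have := phi_cont.comp Real.continuous_sin
    exact this
  have hBc : Continuous fun θ : ℝ =>
      (gegen 1 n (Real.cos θ))^2 * (Real.sin θ^2 * Real.log (Real.sin θ^2)) :=
    (((gegen_continuous n).comp Real.continuous_cos).pow 2).mul
      (phi_cont.comp Real.continuous_sin)
  rw [hsub2, intervalIntegral.integral_congr hcong,
    intervalIntegral.integral_sub (hAc.intervalIntegrable _ _) (hBc.intervalIntegrable _ _)]
  have hA_eq := A_eq n
  rw [← hm] at hA_eq
  rw [hA_eq]
  have hkey := key_integral n
  rw [← hm] at hkey
  have hsplit : (∫ θ in (0:ℝ)..Real.pi,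
        ((gegen 1 n (Real.cos θ))^2 - 1) * (Real.sin θ^2 * Real.log (Real.sin θ^2)))
      = (∫ θ in (0:ℝ)..Real.pi,
          (gegen 1 n (Real.cos θ))^2 * (Real.sin θ^2 * Real.log (Real.sin θ^2)))
        - ∫ θ in (0:ℝ)..Real.pi, Real.sin θ^2 * Real.log (Real.sin θ^2) := by
    rw [← intervalIntegral.integral_sub (hBc.intervalIntegrable _ _)
      (hCc.intervalIntegrable _ _)]
    apply intervalIntegral.integral_congr
    intro θ _
    ring
  rw [hsplit] at hkey
  have hm0 : m ≠ 0 := by positivity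
  have hfinal : Real.pi/(2*m) - Real.pi/2 = Real.pi/2 * (1/m - 1) := by
    field_simp
  linarith [hkey, hfinal]

end Aux
end
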